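/- For a finite signature, every simplification order is well-founded, and hence a reduction order. -/

import Mathlib

/-- First-order terms over a signature `F` with arity function `ar`
and variables from `V`. -/
inductive Trm (F : Type) (ar : F → ℕ) (V : Type) : Type where
  | var : V → Trm F ar V
  | fn  : (f : F) → (Fin (ar f) → Trm F ar V) → Trm F ar V

variable {F V : Type} {ar : F → ℕ}

/-- Application of a substitution to a term. -/
def Trm.subst (θ : V → Trm F ar V) : Trm F ar V → Trm F ar V
  | .var x => θ x
  | .fn f ss => .fn f fun i => (ss i).subst θ

inductive Emb : Trm F ar V → Trm F ar V → Prop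
  | var (x : V) : Emb (.var x) (.var x)
  | sub {s : Trm F ar V} {f : F} {ts : Fin (ar f) → Trm F ar V} (i : Fin (ar f)) :
      Emb s (ts i) → Emb s (.fn f ts)
  | fn {f : F} {ss ts : Fin (ar f) → Trm F ar V} :
      (∀ i, Emb (ss i) (ts i)) → Emb (.fn f ss) (.fn f ts)

lemma Emb.rfl : ∀ t : Trm F ar V, Emb t t
  | .var x => .var x
  | .fn _ ts => .fn fun i => Emb.rfl (ts i)

lemma Emb.trans' : ∀ {t u : Trm F ar V}, Emb t u → ∀ {s}, Emb s t → Emb s u := by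
  intro t u h
  induction h with
  | var x => intro s hs; exact hs
  | sub i h ih => intro s hs; exact .sub i (ih hs)
  | fn h ih =>
    intro s hs
    cases hs with
    | sub j hs' => exact .sub j (ih j hs')
    | fn hs' => exact .fn fun i => ih i (hs' i)

instance : IsRefl (Trm F ar V) Emb := ⟨Emb.rfl⟩
instance : IsTrans (Trm F ar V) Emb := ⟨fun _ _ _ h1 h2 => h2.trans' h1⟩

def Trm.vmem (x : V) : Trm F ar V → Prop
  | .var y => y = x
  | .fn _ ts => ∃ i, (ts i).vmem x

def Trm.size : Trm F ar V → ℕ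
  | .var _ => 1
  | .fn _ ts => 1 + Finset.univ.sum fun i => (ts i).size

lemma Trm.size_lt {f : F} (ts : Fin (ar f) → Trm F ar V) (i : Fin (ar f)) :
    (ts i).size < (Trm.fn f ts).size := by
  have h := Finset.single_le_sum (f := fun j => (ts j).size) (fun j _ => Nat.zero_le _)
    (Finset.mem_univ i)
  have h' : (ts i).size ≤ Finset.univ.sum fun j => (ts j).size := by simpa using h
  have h2 : (Trm.fn f ts).size = 1 + Finset.univ.sum fun j => (ts j).size := rfl
  omega

lemma pwo_pi {α : Type*} {r : α → α → Prop} [IsRefl α r] [IsTrans α r] {T : Set α}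
    (hT : T.PartiallyWellOrderedOn r) :
    ∀ (m : ℕ) (u : ℕ → Fin m → α), (∀ k i, u k i ∈ T) →
      ∃ a b, a < b ∧ ∀ i, r (u a i) (u b i)
  | 0, _, _ => ⟨0, 1, by omega, fun i => i.elim0⟩
  | m + 1, u, hu => by
    haveI : IsPreorder α r := {}
    obtain ⟨φ, hφ⟩ := hT.exists_monotone_subseq (f := fun k => u k 0) (fun k => hu k 0)
    obtain ⟨a, b, hab, hall⟩ :=
      pwo_pi hT m (fun k i => u (φ k) i.succ) (fun k i => hu (φ k) i.succ)
    exact ⟨φ a, φ b, φ.strictMono hab, fun i => Fin.cases (hφ a b hab.le) hall i⟩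

/-- Immediate subterm relation. -/
def ImmSub (s t : Trm F ar V) : Prop :=
  ∃ (f : F) (ts : Fin (ar f) → Trm F ar V) (i : Fin (ar f)), t = .fn f ts ∧ s = ts i

lemma kruskal [Finite F] (P : V → Prop) (hP : ∀ x y, P x → P y → x = y) :
    Set.PartiallyWellOrderedOn {t : Trm F ar V | ∀ x, t.vmem x → P x} Emb := by
  classical
  set S : Set (Trm F ar V) := {t | ∀ x, t.vmem x → P x} with hS
  have hSsub : ∀ {s t : Trm F ar V}, ImmSub s t → t ∈ S → s ∈ S := by
    rintro s t ⟨f, ts, i, rfl, rfl⟩ ht x hx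
    exact ht x ⟨i, hx⟩
  rw [Set.PartiallyWellOrderedOn.iff_not_exists_isMinBadSeq Trm.size]
  rintro ⟨g, hgbad, hgmin⟩
  -- the set of immediate subterms of terms of `g` is partially well ordered
  have hT : Set.PartiallyWellOrderedOn {t : Trm F ar V | ∃ n, ImmSub t (g n)} Emb := by
    rw [Set.PartiallyWellOrderedOn.iff_forall_not_isBadSeq]
    rintro h ⟨hmem, hbad⟩
    choose n hn using hmem
    have hex : ∃ m, ∃ k, n k = m := ⟨n 0, 0, rfl⟩
    obtain ⟨k0, hk0⟩ := Nat.find_spec hex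
    have hmin : ∀ k, Nat.find hex ≤ n k := fun k => Nat.find_min' hex ⟨k, rfl⟩
    set m0 := Nat.find hex with hm0
    -- the combined sequence
    set c : ℕ → Trm F ar V := fun j => if j < m0 then g j else h (k0 + (j - m0)) with hc
    have hcbad : Set.PartiallyWellOrderedOn.IsBadSeq Emb S c := by
      constructor
      · intro j
        by_cases hj : j < m0
        · simp only [hc, if_pos hj]; exact hgbad.1 j
        · simp only [hc, if_neg hj]
          exact hSsub (hn _) (hgbad.1 _)
      · intro a b hab hemb
        by_cases hb : b < m0
        · have ha : a < m0 := hab.trans hb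
          rw [hc] at hemb; simp only [if_pos ha, if_pos hb] at hemb
          exact hgbad.2 a b hab hemb
        · by_cases ha : a < m0
          · rw [hc] at hemb; simp only [if_pos ha, if_neg hb] at hemb
            set kb := k0 + (b - m0)
            obtain ⟨f, ts, i, hfn, hsub'⟩ := hn kb
            have : Emb (g a) (g (n kb)) := by
              rw [hfn]
              exact .sub i (by rw [← hsub']; exact hemb)
            have halt : a < n kb := lt_of_lt_of_le (hm0 ▸ ha) (hmin kb)
            exact hgbad.2 a (n kb) halt this
          · rw [hc] at hemb; simp only [if_neg ha, if_neg hb] at hemb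
            have h1 : k0 + (a - m0) < k0 + (b - m0) := by omega
            exact hbad _ _ h1 hemb
    -- contradiction with minimality at position m0
    refine hgmin m0 c (fun m hm => by simp only [hc, if_pos hm]) ?_ hcbad
    have hcm0 : c m0 = h k0 := by simp [hc]
    obtain ⟨f0, ts0, i0, hfn, hsH⟩ := hn k0
    calc (c m0).size = (ts0 i0).size := by rw [hcm0, hsH]
      _ < (Trm.fn f0 ts0).size := Trm.size_lt ts0 i0
      _ = (g m0).size := by rw [← hk0, hfn]
  -- pigeonhole on root symbols
  set rt : ℕ → Option F := fun k => match g k with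
    | .var _ => none
    | .fn f _ => some f with hrt
  haveI : Fintype F := Fintype.ofFinite F
  obtain ⟨o, ho⟩ := Finite.exists_infinite_fiber rt
  have hinf : {k | rt k = o}.Infinite := by
    rw [← Set.infinite_coe_iff]; exact ho
  set p : ℕ → Prop := fun k => rt k = o with hp
  have hpinf : (setOf p).Infinite := hinf
  cases o with
  | none =>
    set a := Nat.nth p 0
    set b := Nat.nth p 1
    have hab : a < b := (Nat.nth_lt_nth hpinf).mpr (by omega)
    have hpa : p a := Nat.nth_mem_of_infinite hpinf 0
    have hpb : p b := Nat.nth_mem_of_infinite hpinf 1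
    obtain ⟨x, hx⟩ : ∃ x, g a = .var x := by
      rcases hga : g a with y | ⟨f, ss⟩
      · exact ⟨y, rfl⟩
      · exact absurd hpa (by simp [hp, hrt, hga])
    obtain ⟨y, hy⟩ : ∃ y, g b = .var y := by
      rcases hgb : g b with z | ⟨f, ss⟩
      · exact ⟨z, rfl⟩
      · exact absurd hpb (by simp [hp, hrt, hgb])
    have hPx : P x := hgbad.1 a x (by rw [hx]; exact rfl)
    have hPy : P y := hgbad.1 b y (by rw [hy]; exact rfl)
    have hxy : x = y := hP x y hPx hPy
    refine hgbad.2 a b hab ?_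
    rw [hx, hy, hxy]
    exact .var y
  | some f =>
    have hk : ∀ k, ∃ ss : Fin (ar f) → Trm F ar V, g (Nat.nth p k) = .fn f ss := by
      intro k
      have hpk : p (Nat.nth p k) := Nat.nth_mem_of_infinite hpinf k
      rcases hgk : g (Nat.nth p k) with y | ⟨f', ss⟩
      · exact absurd hpk (by show ¬ (rt (Nat.nth p k) = some f); simp [hrt, hgk])
      · have : f' = f := by
          have : rt (Nat.nth p k) = some f := hpk
          simp only [hrt, hgk] at this
          exact Option.some_injective _ this
        subst this
        exact ⟨ss, rfl⟩
    choose ts hts using hk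
    obtain ⟨a, b, hab, hall⟩ := pwo_pi hT (ar f) ts
      (fun k i => ⟨Nat.nth p k, f, ts k, i, hts k, rfl⟩)
    refine hgbad.2 (Nat.nth p a) (Nat.nth p b) ((Nat.nth_lt_nth hpinf).mpr hab) ?_
    rw [hts a, hts b]
    exact .fn hall

attribute [local instance] Classical.propDecidable

lemma mono_all (GT : Trm F ar V → Trm F ar V → Prop)
    (htrans : Transitive GT)
    (hmono : ∀ (f : F) (ss : Fin (ar f) → Trm F ar V) (i : Fin (ar f)) (t : Trm F ar V),
      GT (ss i) t → GT (.fn f ss) (.fn f (Function.update ss i t))) :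
    ∀ (N : ℕ) (f : F) (ss ts : Fin (ar f) → Trm F ar V),
      (Finset.univ.filter fun i => ss i ≠ ts i).card ≤ N →
      (∀ i, GT (ts i) (ss i) ∨ ss i = ts i) →
      GT (.fn f ts) (.fn f ss) ∨ (Trm.fn f ss) = .fn f ts := by
  classical
  intro N
  induction N with
  | zero =>
    intro f ss ts hcard h
    right
    have hss : ss = ts := by
      funext j
      by_contra hne
      have : j ∈ Finset.univ.filter fun i => ss i ≠ ts i := by simp [hne]
      have := Finset.card_pos.mpr ⟨j, this⟩
      omega
    rw [hss]
  | succ N ih =>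
    intro f ss ts hcard h
    by_cases hss : ss = ts
    · right; rw [hss]
    · obtain ⟨i, hi⟩ := Function.ne_iff.mp hss
      have hgt : GT (ts i) (ss i) := (h i).resolve_right fun e => hi e
      set ts' := Function.update ts i (ss i) with hts'
      have h1 : GT (.fn f ts) (.fn f ts') := hmono f ts i (ss i) hgt
      have h2 : ∀ j, GT (ts' j) (ss j) ∨ ss j = ts' j := by
        intro j
        by_cases hj : j = i
        · subst hj; right; simp [hts']
        · rw [hts', Function.update_of_ne hj]; exact h j
      have hmem : i ∈ Finset.univ.filter fun j => ss j ≠ ts j := by simp [hi]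
      have hsubset : (Finset.univ.filter fun j => ss j ≠ ts' j) ⊆
          (Finset.univ.filter fun j => ss j ≠ ts j).erase i := by
        intro j hj
        simp only [Finset.mem_filter, Finset.mem_univ, true_and] at hj
        have hji : j ≠ i := by rintro rfl; exact hj (by simp [hts'])
        rw [Finset.mem_erase]
        refine ⟨hji, ?_⟩
        simp only [Finset.mem_filter, Finset.mem_univ, true_and]
        rwa [hts', Function.update_of_ne hji] at hj
      have hcard' : (Finset.univ.filter fun j => ss j ≠ ts' j).card ≤ N := by
        have := Finset.card_le_card hsubset
        rw [Finset.card_erase_of_mem hmem] at this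
        have hpos := Finset.card_pos.mpr ⟨i, hmem⟩
        omega
      rcases ih f ss ts' hcard' h2 with h3 | h3
      · exact Or.inl (htrans h1 h3)
      · left; rw [h3]; exact h1

lemma emb_ge (GT : Trm F ar V → Trm F ar V → Prop)
    (htrans : Transitive GT)
    (hmono : ∀ (f : F) (ss : Fin (ar f) → Trm F ar V) (i : Fin (ar f)) (t : Trm F ar V),
      GT (ss i) t → GT (.fn f ss) (.fn f (Function.update ss i t)))
    (hsub : ∀ (f : F) (ss : Fin (ar f) → Trm F ar V) (i : Fin (ar f)),
      GT (.fn f ss) (ss i))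
    {s t : Trm F ar V} (h : Emb s t) : GT t s ∨ s = t := by
  induction h with
  | var x => exact Or.inr rfl
  | sub i h ih =>
    left
    rcases ih with h' | h'
    · exact htrans (hsub _ _ i) h'
    · rw [h']; exact hsub _ _ i
  | fn h ih => exact mono_all GT htrans hmono _ _ _ _ le_rfl ih


lemma vmem_collapse (v0 : V) :
    ∀ (t : Trm F ar V) (x : V), (t.subst fun _ => .var v0).vmem x → x = v0
  | .var y, x, h => by
      simp only [Trm.subst, Trm.vmem] at h; exact h.symm
  | .fn f ts, x, h => by
      obtain ⟨i, hi⟩ := h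
      exact vmem_collapse v0 (ts i) x hi


/-- For a finite signature, every simplification order (a monotonic,
stable strict order with the subterm property) is well-founded, and
hence a reduction order. -/
theorem simplification_order_well_founded
    {F V : Type} [Finite F] {ar : F → ℕ}
    (GT : Trm F ar V → Trm F ar V → Prop)
    (htrans : Transitive GT)
    (hirrefl : ∀ s, ¬ GT s s)
    (hmono : ∀ (f : F) (ss : Fin (ar f) → Trm F ar V) (i : Fin (ar f)) (t : Trm F ar V),
        GT (ss i) t → GT (.fn f ss) (.fn f (Function.update ss i t)))
    (hstable : ∀ (s t : Trm F ar V) (θ : V → Trm F ar V),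
        GT s t → GT (s.subst θ) (t.subst θ))
    (hsub : ∀ (f : F) (ss : Fin (ar f) → Trm F ar V) (i : Fin (ar f)),
        GT (.fn f ss) (ss i)) :
    WellFounded (Function.swap GT) := by
  haveI : IsTrans (Trm F ar V) (Function.swap GT) := ⟨fun _ _ _ h1 h2 => htrans h2 h1⟩
  haveI : IsIrrefl (Trm F ar V) (Function.swap GT) := ⟨hirrefl⟩
  haveI : IsStrictOrder (Trm F ar V) (Function.swap GT) := {}
  rw [RelEmbedding.wellFounded_iff_isEmpty]
  constructor
  intro e
  have hchain : ∀ m n : ℕ, m < n → GT (e m) (e n) := fun m n h => e.map_rel_iff.mpr h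
  have key : ∀ (u : ℕ → Trm F ar V) (P : V → Prop),
      (∀ x y, P x → P y → x = y) →
      (∀ n x, (u n).vmem x → P x) →
      (∀ m n, m < n → GT (u m) (u n)) → False := by
    intro u P hP humem huchain
    obtain ⟨a, b, hab, hemb⟩ := kruskal P hP (fun n => ⟨u n, humem n⟩)
    rcases emb_ge GT htrans hmono hsub (show Emb (u a) (u b) from hemb) with hgt | heq
    · exact hirrefl (u a) (htrans (huchain a b hab) hgt)
    · have h := huchain a b hab
      rw [heq] at h
      exact hirrefl _ h
  by_cases hV : Nonempty V
  · obtain ⟨v0⟩ := hV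
    refine key (fun n => (e n).subst fun _ => .var v0) (fun x => x = v0) ?_ ?_ ?_
    · rintro x y rfl rfl; rfl
    · intro n x hx
      exact vmem_collapse v0 (e n) x hx
    · intro m n h
      exact hstable _ _ _ (hchain m n h)
  · refine key (fun n => e n) (fun _ => True) ?_ ?_ ?_
    · intro x y _ _
      exact absurd ⟨x⟩ hV
    · intro n x _
      trivial
    · exact hchain
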